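/- Let q be a real number with q > 1, and let k, s be nonnegative integers. Then the coefficient of u^s in the formal power series (over ℝ) Π_{j=0}^{k-1} (1 - u q^{-2j-1})^{-1} equals ( (q^{-2k}; q^{-2})_s / (q^{-2}; q^{-2})_s ) · q^{-s}. -/

import Mathlib

/-- The q-Pochhammer symbol `(a; Q)_n = ∏_{j=0}^{n-1} (1 - a Q^j)` over the reals. -/
noncomputable def qPoch (a Q : ℝ) (n : ℕ) : ℝ := ∏ j ∈ Finset.range n, (1 - a * Q ^ j)

lemma qPoch_zero (a Q : ℝ) : qPoch a Q 0 = 1 := by simp [qPoch]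

lemma qPoch_succ (a Q : ℝ) (n : ℕ) :
    qPoch a Q (n + 1) = qPoch a Q n * (1 - a * Q ^ n) :=
  Finset.prod_range_succ _ _

lemma qPoch_succ' (a Q : ℝ) (n : ℕ) :
    qPoch a Q (n + 1) = (1 - a) * qPoch (a * Q) Q n := by
  rw [qPoch, Finset.prod_range_succ']
  simp only [pow_zero, mul_one]
  rw [mul_comm, qPoch]
  congr 1
  refine Finset.prod_congr rfl fun i _ => ?_
  rw [pow_succ']
  ring

lemma qPoch_ne_zero (Q : ℝ) (h0 : 0 ≤ Q) (h1 : Q < 1) (s : ℕ) : qPoch Q Q s ≠ 0 := by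
  rw [qPoch]
  refine Finset.prod_ne_zero_iff.2 fun j _ => ?_
  have h2 : Q ^ j ≤ 1 := pow_le_one₀ h0 h1.le
  have h3 : 0 ≤ Q ^ j := pow_nonneg h0 j
  nlinarith

lemma zpow_neg_nat (q : ℝ) (n : ℕ) : q ^ (-(n : ℤ)) = (q⁻¹) ^ n := by
  rw [zpow_neg, zpow_natCast, inv_pow]

/-- The key algebraic recurrence for the right-hand side. -/
lemma rhs_rec (q : ℝ) (hq : 1 < q) (k s : ℕ) :
    qPoch (q ^ (-(2 * ((k + 1 : ℕ) : ℤ)))) (q ^ (-2 : ℤ)) (s + 1)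
        / qPoch (q ^ (-2 : ℤ)) (q ^ (-2 : ℤ)) (s + 1) * q ^ (-((s + 1 : ℕ) : ℤ))
      = qPoch (q ^ (-(2 * (k : ℤ)))) (q ^ (-2 : ℤ)) (s + 1)
          / qPoch (q ^ (-2 : ℤ)) (q ^ (-2 : ℤ)) (s + 1) * q ^ (-((s + 1 : ℕ) : ℤ))
        + q ^ (-(2 * (k : ℤ) + 1))
          * (qPoch (q ^ (-(2 * ((k + 1 : ℕ) : ℤ)))) (q ^ (-2 : ℤ)) s
              / qPoch (q ^ (-2 : ℤ)) (q ^ (-2 : ℤ)) s * q ^ (-(s : ℤ))) := by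
  have hq0 : (0 : ℝ) < q := lt_trans one_pos hq
  set t : ℝ := q⁻¹ with ht
  have ht0 : 0 < t := inv_pos.2 hq0
  have ht1 : t < 1 := inv_lt_one_of_one_lt₀ hq
  have e1 : q ^ (-(2 * ((k + 1 : ℕ) : ℤ))) = t ^ (2 * k + 2) := by
    rw [show -(2 * ((k + 1 : ℕ) : ℤ)) = -((2 * k + 2 : ℕ) : ℤ) by push_cast; ring,
      zpow_neg_nat]
  have e2 : q ^ (-2 : ℤ) = t ^ 2 := by
    rw [show (-2 : ℤ) = -((2 : ℕ) : ℤ) by norm_num, zpow_neg_nat]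
  have e3 : q ^ (-((s + 1 : ℕ) : ℤ)) = t ^ (s + 1) := zpow_neg_nat q (s + 1)
  have e4 : q ^ (-(2 * (k : ℤ) + 1)) = t ^ (2 * k + 1) := by
    rw [show -(2 * (k : ℤ) + 1) = -((2 * k + 1 : ℕ) : ℤ) by push_cast; ring, zpow_neg_nat]
  have e5 : q ^ (-(2 * (k : ℤ))) = t ^ (2 * k) := by
    rw [show -(2 * (k : ℤ)) = -((2 * k : ℕ) : ℤ) by push_cast; ring, zpow_neg_nat]
  have e6 : q ^ (-(s : ℤ)) = t ^ s := zpow_neg_nat q s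
  rw [e1, e2, e3, e4, e5, e6]
  have hQ0 : (0 : ℝ) ≤ t ^ 2 := by positivity
  have hQ1 : t ^ 2 < 1 := by nlinarith
  have hD0 : qPoch (t ^ 2) (t ^ 2) s ≠ 0 := qPoch_ne_zero _ hQ0 hQ1 s
  have hE : (1 : ℝ) - t ^ 2 * (t ^ 2) ^ s ≠ 0 := by
    have h2 : (t ^ 2) ^ s ≤ 1 := pow_le_one₀ hQ0 hQ1.le
    have h3 : (0 : ℝ) ≤ (t ^ 2) ^ s := pow_nonneg hQ0 s
    nlinarith
  rw [qPoch_succ (t ^ (2 * k + 2)), qPoch_succ (t ^ 2),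
    qPoch_succ' (t ^ (2 * k)),
    show t ^ (2 * k) * t ^ 2 = t ^ (2 * k + 2) by rw [pow_add]]
  field_simp
  ring

/-- The coefficient of `u^s` in the formal power series `∏_{j=0}^{k-1} (1 - u q^{-2j-1})⁻¹`
is `((q^{-2k}; q^{-2})_s / (q^{-2}; q^{-2})_s) q^{-s}`. -/
theorem coeff_geometric_product (q : ℝ) (hq : 1 < q) (k s : ℕ) :
    PowerSeries.coeff (R := ℝ) s
      (∏ j ∈ Finset.range k,
        (1 - PowerSeries.C (R := ℝ) (q ^ (-(2 * (j : ℤ) + 1))) * PowerSeries.X)⁻¹)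
    = qPoch (q ^ (-(2 * (k : ℤ)))) (q ^ (-2 : ℤ)) s
        / qPoch (q ^ (-2 : ℤ)) (q ^ (-2 : ℤ)) s * q ^ (-(s : ℤ)) := by
  induction k generalizing s with
  | zero =>
    simp only [Finset.range_zero, Finset.prod_empty, PowerSeries.coeff_one]
    cases s with
    | zero => simp [qPoch]
    | succ n =>
      rw [if_neg (Nat.succ_ne_zero n)]
      have h0 : qPoch (q ^ (-(2 * ((0 : ℕ) : ℤ)))) (q ^ (-2 : ℤ)) (n + 1) = 0 := by
        rw [qPoch]
        refine Finset.prod_eq_zero (Finset.mem_range.2 (Nat.succ_pos n)) ?_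
        norm_num
      rw [h0, zero_div, zero_mul]
  | succ k ih =>
    set a : ℝ := q ^ (-(2 * (k : ℤ) + 1)) with ha
    set F : ℕ → PowerSeries ℝ := fun m =>
      ∏ j ∈ Finset.range m,
        (1 - PowerSeries.C (R := ℝ) (q ^ (-(2 * (j : ℤ) + 1))) * PowerSeries.X)⁻¹ with hF
    have hconst : PowerSeries.constantCoeff (R := ℝ)
        (1 - PowerSeries.C (R := ℝ) a * PowerSeries.X) = 1 := by simp
    have hmul : F (k + 1) * (1 - PowerSeries.C (R := ℝ) a * PowerSeries.X) = F k := by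
      rw [hF]
      simp only
      rw [Finset.prod_range_succ, mul_assoc,
        PowerSeries.inv_mul_cancel _ (by rw [hconst]; exact one_ne_zero), mul_one]
    induction s with
    | zero =>
      rw [PowerSeries.coeff_zero_eq_constantCoeff, map_prod]
      have : ∀ j ∈ Finset.range (k + 1),
          PowerSeries.constantCoeff (R := ℝ)
            (1 - PowerSeries.C (R := ℝ) (q ^ (-(2 * (j : ℤ) + 1))) * PowerSeries.X)⁻¹ = 1 := by
        intro j _
        rw [PowerSeries.constantCoeff_inv]
        simp
      rw [Finset.prod_congr rfl this, Finset.prod_const_one]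
      simp [qPoch]
    | succ s ihs =>
      have key : PowerSeries.coeff (R := ℝ) (s + 1) (F (k + 1))
          - a * PowerSeries.coeff (R := ℝ) s (F (k + 1))
          = PowerSeries.coeff (R := ℝ) (s + 1) (F k) := by
        rw [← hmul]
        have expand : F (k + 1) * (1 - PowerSeries.C (R := ℝ) a * PowerSeries.X)
            = F (k + 1) - (F (k + 1) * PowerSeries.C (R := ℝ) a) * PowerSeries.X := by ring
        rw [expand, map_sub, PowerSeries.coeff_succ_mul_X, PowerSeries.coeff_mul_C]
        ring
      have hFk : PowerSeries.coeff (R := ℝ) (s + 1) (F (k + 1))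
          = PowerSeries.coeff (R := ℝ) (s + 1) (F k)
            + a * PowerSeries.coeff (R := ℝ) s (F (k + 1)) := by
        rw [← key]; ring
      rw [hFk, ih (s + 1), ihs]
      exact (rhs_rec q hq k s).symm
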